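/- arXiv:2207.10716 — 6 statements merged into one kernel-verified Lean document; each statement's English description precedes it below -/
import Mathlib

section
/- In the covariate shift setting, if P̃_X is absolutely continuous with respect to P_X and the model-fitting algorithm 𝒜 is symmetric, then for every α ∈ (0,1) the JAW prediction interval satisfies ℙ{Y_{n+1} ∈ Ĉ^JAW_{n,α}(X_{n+1})} = ℙ{Q⁻_α ≤ Y_{n+1} ≤ Q⁺_{1−α}} ≥ 1 − 2α, where the probability is over the joint draw of the n training points and the test point. -/
open MeasureTheory ProbabilityTheory Finset
open scoped ENNReal
set_option maxHeartbeats 1600000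

/-- The level-`β` lower quantile of a weighted empirical distribution: values
`v₁,…,vₙ`, weights `q₁,…,qₙ`, and extra mass `qExtra` (= `q_{n+1}`) at `-∞`:
`Q⁻_β = inf {t ∈ ℝ : q_{n+1} + ∑_{i ≤ n : vᵢ ≤ t} qᵢ ≥ β}`, the infimum taken in the
extended real line (equal to `+∞` when the defining set is empty). -/
noncomputable def weightedLowerQuantile {n : ℕ} (v q : Fin n → ℝ) (qExtra β : ℝ) : EReal :=
  sInf (Real.toEReal '' {t : ℝ | β ≤ qExtra + ∑ i ∈ univ.filter (fun i => v i ≤ t), q i})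

/-- The level-`β` upper quantile of a weighted empirical distribution: values
`v₁,…,vₙ`, weights `q₁,…,qₙ`, and extra mass `q_{n+1}` at `+∞`:
`Q⁺_β = inf {t ∈ ℝ : ∑_{i ≤ n : vᵢ ≤ t} qᵢ ≥ β}`, the infimum taken in the extended
real line (equal to `+∞` when the defining set is empty). -/
noncomputable def weightedUpperQuantile {n : ℕ} (v q : Fin n → ℝ) (β : ℝ) : EReal :=
  sInf (Real.toEReal '' {t : ℝ | β ≤ ∑ i ∈ univ.filter (fun i => v i ≤ t), q i})

/-- A model-fitting algorithm: for each sample size `m`, it maps a sequence of `m`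
labeled points in `ℝ^d × ℝ` to a regression function `ℝ^d → ℝ`. -/
def FittingAlg (d : ℕ) : Type :=
  ∀ m : ℕ, (Fin m → (Fin d → ℝ) × ℝ) → (Fin d → ℝ) → ℝ

/-- Leave-one-out model `μ̂₋ᵢ`: the algorithm applied to the `n+1` training points
with the `i`-th point removed. -/
def looModel {d n : ℕ} (𝒜 : FittingAlg d) (train : Fin (n + 1) → (Fin d → ℝ) × ℝ)
    (i : Fin (n + 1)) : (Fin d → ℝ) → ℝ :=
  𝒜 n (fun j => train (i.succAbove j))

/-- Leave-one-out residual `Rᵢ = |Yᵢ - μ̂₋ᵢ(Xᵢ)|`. -/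
noncomputable def looResid {d n : ℕ} (𝒜 : FittingAlg d)
    (train : Fin (n + 1) → (Fin d → ℝ) × ℝ) (i : Fin (n + 1)) : ℝ :=
  |(train i).2 - looModel 𝒜 train i (train i).1|

/-- Normalized likelihood-ratio weight of the `i`-th training point at the point `x`:
`pᵢ^w(x) = w(Xᵢ) / (∑ⱼ w(Xⱼ) + w(x))`. -/
noncomputable def nlrWeight {d n : ℕ} (w : (Fin d → ℝ) → ℝ)
    (train : Fin (n + 1) → (Fin d → ℝ) × ℝ) (x : Fin d → ℝ) (i : Fin (n + 1)) : ℝ :=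
  w (train i).1 / (∑ j, w (train j).1 + w x)

/-- Normalized likelihood-ratio weight of the test point at `x`:
`p_{n+2}^w(x) = w(x) / (∑ⱼ w(Xⱼ) + w(x))`. -/
noncomputable def nlrWeightTest {d n : ℕ} (w : (Fin d → ℝ) → ℝ)
    (train : Fin (n + 1) → (Fin d → ℝ) × ℝ) (x : Fin d → ℝ) : ℝ :=
  w x / (∑ j, w (train j).1 + w x)

/-- The joint law of the data: the `n+1` training points are i.i.d. with law
`P_X ⊗ₘ P_{Y|X}`, and the test point, independent of them, has law `P̃_X ⊗ₘ P_{Y|X}`. -/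
noncomputable def jointLaw {d n : ℕ} (PX PtX : Measure (Fin d → ℝ))
    [SFinite PX] [SFinite PtX]
    (K : Kernel (Fin d → ℝ) ℝ) [IsSFiniteKernel K] :
    Measure ((Fin (n + 1) → (Fin d → ℝ) × ℝ) × ((Fin d → ℝ) × ℝ)) :=
  (Measure.pi fun _ : Fin (n + 1) => PX.compProd K).prod (PtX.compProd K)

section JAWProof

open scoped ENNReal

variable {d : ℕ}

private lemma alg_comp_eq (𝒜 : FittingAlg d)
    (hsymm : ∀ (m : ℕ) (σ : Equiv.Perm (Fin m)) (data : Fin m → (Fin d → ℝ) × ℝ),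
      𝒜 m (data ∘ σ) = 𝒜 m data)
    {m N : ℕ} (ζ : Fin N → (Fin d → ℝ) × ℝ) (e₁ e₂ : Fin m → Fin N)
    (h1 : Function.Injective e₁) (h2 : Function.Injective e₂)
    (hr : Set.range e₁ = Set.range e₂) :
    𝒜 m (ζ ∘ e₁) = 𝒜 m (ζ ∘ e₂) := by
  have hex : ∀ k, ∃ j, e₁ j = e₂ k := by
    intro k
    have h : e₂ k ∈ Set.range e₁ := by rw [hr]; exact Set.mem_range_self k
    exact h
  choose τ hτ using hex
  have hinj : Function.Injective τ := fun a b hab => h2 (by rw [← hτ a, ← hτ b, hab])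
  have hbij := Finite.injective_iff_bijective.mp hinj
  have hco : (ζ ∘ e₁) ∘ (Equiv.ofBijective τ hbij) = ζ ∘ e₂ := by
    funext k
    simp only [Function.comp_apply, Equiv.ofBijective_apply, hτ k]
  rw [← hsymm m (Equiv.ofBijective τ hbij) (ζ ∘ e₁), hco]

/-- The model fitted on all of the `n+2` data points except `i` and `j`. -/
noncomputable def gmodel (𝒜 : FittingAlg d) (n : ℕ) (i j : Fin (n + 2))
    (ζ : Fin (n + 2) → (Fin d → ℝ) × ℝ) : (Fin d → ℝ) → ℝ :=
  if h : ({i, j}ᶜ : Finset (Fin (n + 2))).card = n then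
    𝒜 n (ζ ∘ (({i, j}ᶜ : Finset (Fin (n + 2))).orderEmbOfFin h))
  else fun _ => 0

private lemma card_pair_compl {n : ℕ} {i j : Fin (n + 2)} (h : i ≠ j) :
    ({i, j}ᶜ : Finset (Fin (n + 2))).card = n := by
  rw [Finset.card_compl, Finset.card_pair h]
  simp

private lemma gmodel_symm (𝒜 : FittingAlg d) (n : ℕ) (i j : Fin (n + 2))
    (ζ : Fin (n + 2) → (Fin d → ℝ) × ℝ) :
    gmodel 𝒜 n i j ζ = gmodel 𝒜 n j i ζ := by
  unfold gmodel
  rw [Finset.pair_comm i j]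

private lemma gmodel_swap (𝒜 : FittingAlg d)
    (hsymm : ∀ (m : ℕ) (σ : Equiv.Perm (Fin m)) (data : Fin m → (Fin d → ℝ) × ℝ),
      𝒜 m (data ∘ σ) = 𝒜 m data)
    (n : ℕ) (σ : Equiv.Perm (Fin (n + 2))) (i j : Fin (n + 2))
    (ζ : Fin (n + 2) → (Fin d → ℝ) × ℝ) :
    gmodel 𝒜 n i j (ζ ∘ σ) = gmodel 𝒜 n (σ i) (σ j) ζ := by
  have himg : ({σ i, σ j}ᶜ : Finset (Fin (n + 2))) =
      Finset.image σ ({i, j}ᶜ : Finset (Fin (n + 2))) := by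
    ext k
    simp only [Finset.mem_compl, Finset.mem_insert, Finset.mem_singleton, Finset.mem_image]
    constructor
    · intro hk
      push_neg at hk
      refine ⟨σ.symm k, ?_, by simp⟩
      push_neg
      constructor
      · intro he; exact hk.1 (by rw [← he]; simp)
      · intro he; exact hk.2 (by rw [← he]; simp)
    · rintro ⟨a, ha, rfl⟩
      push_neg at ha ⊢
      exact ⟨fun he => ha.1 (σ.injective he), fun he => ha.2 (σ.injective he)⟩
  by_cases hij : i = j
  · subst hij
    unfold gmodel
    have h1 : ¬ ({i, i}ᶜ : Finset (Fin (n + 2))).card = n := by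
      simp [Finset.card_compl]
    have h2 : ¬ ({σ i, σ i}ᶜ : Finset (Fin (n + 2))).card = n := by
      simp [Finset.card_compl]
    rw [dif_neg h1, dif_neg h2]
  · have hσij : σ i ≠ σ j := fun he => hij (σ.injective he)
    unfold gmodel
    rw [dif_pos (card_pair_compl hij), dif_pos (card_pair_compl hσij)]
    rw [show (ζ ∘ σ) ∘ (({i, j}ᶜ : Finset (Fin (n + 2))).orderEmbOfFin (card_pair_compl hij)) =
        ζ ∘ (σ ∘ (({i, j}ᶜ : Finset (Fin (n + 2))).orderEmbOfFin (card_pair_compl hij)))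
      from rfl]
    apply alg_comp_eq 𝒜 hsymm
    · exact σ.injective.comp (({i, j}ᶜ : Finset (Fin (n + 2))).orderEmbOfFin
        (card_pair_compl hij)).injective
    · exact (({σ i, σ j}ᶜ : Finset (Fin (n + 2))).orderEmbOfFin
        (card_pair_compl hσij)).injective
    · rw [Set.range_comp, Finset.range_orderEmbOfFin, Finset.range_orderEmbOfFin, himg,
        Finset.coe_image]

private lemma looModel_eq_gmodel {n : ℕ} (𝒜 : FittingAlg d)
    (hsymm : ∀ (m : ℕ) (σ : Equiv.Perm (Fin m)) (data : Fin m → (Fin d → ℝ) × ℝ),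
      𝒜 m (data ∘ σ) = 𝒜 m data)
    (train : Fin (n + 1) → (Fin d → ℝ) × ℝ) (z : (Fin d → ℝ) × ℝ) (i : Fin (n + 1)) :
    looModel 𝒜 train i = gmodel 𝒜 n (Fin.castSucc i) (Fin.last (n + 1)) (Fin.snoc train z) := by
  have hne : (Fin.castSucc i : Fin (n + 2)) ≠ Fin.last (n + 1) :=
    (Fin.castSucc_lt_last i).ne
  unfold gmodel
  rw [dif_pos (card_pair_compl hne)]
  have h1 : ((Fin.snoc train z : Fin (n + 2) → (Fin d → ℝ) × ℝ) ∘
      (fun j => Fin.castSucc (i.succAbove j))) = fun j => train (i.succAbove j) := by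
    funext j
    simp [Fin.snoc_castSucc]
  rw [show looModel 𝒜 train i = 𝒜 n (fun j => train (i.succAbove j)) from rfl, ← h1]
  apply alg_comp_eq 𝒜 hsymm
  · exact Fin.castSucc_injective _ |>.comp (Fin.succAbove_right_injective)
  · exact (Finset.orderEmbOfFin _ _).injective
  · rw [Finset.range_orderEmbOfFin]
    ext k
    simp only [Set.mem_range, Finset.coe_compl, Set.mem_compl_iff, Finset.coe_insert,
      Set.mem_insert_iff, Finset.coe_singleton, Set.mem_singleton_iff]
    constructor
    · rintro ⟨j, rfl⟩
      push_neg
      constructor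
      · intro he
        exact Fin.succAbove_ne i j (Fin.castSucc_injective _ he)
      · exact (Fin.castSucc_lt_last _).ne
    · intro hk
      push_neg at hk
      obtain ⟨hk1, hk2⟩ := hk
      obtain ⟨k', rfl⟩ : ∃ k' : Fin (n + 1), Fin.castSucc k' = k := by
        rcases Fin.eq_castSucc_or_eq_last k with h | h
        · obtain ⟨k', hk'⟩ := h; exact ⟨k', hk'.symm⟩
        · exact absurd h hk2
      have hk1' : k' ≠ i := fun he => hk1 (by rw [he])
      obtain ⟨j, hj⟩ := Fin.exists_succAbove_eq hk1'
      exact ⟨j, by rw [hj]⟩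

/-- The leave-(i,j)-out residual at point `i`. -/
noncomputable def rrJ (𝒜 : FittingAlg d) {n : ℕ} (i j : Fin (n + 2))
    (ζ : Fin (n + 2) → (Fin d → ℝ) × ℝ) : ℝ :=
  |(ζ i).2 - gmodel 𝒜 n i j ζ (ζ i).1|

/-- Total weighted score of comparisons won by point `k`. -/
noncomputable def strangeSum (𝒜 : FittingAlg d) (w : (Fin d → ℝ) → ℝ) {n : ℕ}
    (k : Fin (n + 2)) (ζ : Fin (n + 2) → (Fin d → ℝ) × ℝ) : ℝ :=
  ∑ i ∈ univ.erase k, if rrJ 𝒜 i k ζ < rrJ 𝒜 k i ζ then w (ζ i).1 else 0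

/-- Point `k` is strange in the `n+2`-point data set `ζ`. -/
def StrangeJ (𝒜 : FittingAlg d) (w : (Fin d → ℝ) → ℝ) (α : ℝ) {n : ℕ}
    (k : Fin (n + 2)) (ζ : Fin (n + 2) → (Fin d → ℝ) × ℝ) : Prop :=
  (1 - α) * (∑ j, w (ζ j).1) ≤ strangeSum 𝒜 w k ζ

noncomputable instance StrangeJ.decidable (𝒜 : FittingAlg d) (w : (Fin d → ℝ) → ℝ)
    (α : ℝ) {n : ℕ} (k : Fin (n + 2)) (ζ : Fin (n + 2) → (Fin d → ℝ) × ℝ) :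
    Decidable (StrangeJ 𝒜 w α k ζ) :=
  inferInstanceAs (Decidable ((1 - α) * (∑ j, w (ζ j).1) ≤ strangeSum 𝒜 w k ζ))

private lemma rrJ_swap (𝒜 : FittingAlg d)
    (hsymm : ∀ (m : ℕ) (σ : Equiv.Perm (Fin m)) (data : Fin m → (Fin d → ℝ) × ℝ),
      𝒜 m (data ∘ σ) = 𝒜 m data)
    {n : ℕ} (σ : Equiv.Perm (Fin (n + 2))) (i j : Fin (n + 2))
    (ζ : Fin (n + 2) → (Fin d → ℝ) × ℝ) :
    rrJ 𝒜 i j (ζ ∘ σ) = rrJ 𝒜 (σ i) (σ j) ζ := by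
  unfold rrJ
  rw [gmodel_swap 𝒜 hsymm n σ i j ζ]
  rfl

private lemma strange_swap (𝒜 : FittingAlg d)
    (hsymm : ∀ (m : ℕ) (σ : Equiv.Perm (Fin m)) (data : Fin m → (Fin d → ℝ) × ℝ),
      𝒜 m (data ∘ σ) = 𝒜 m data)
    (w : (Fin d → ℝ) → ℝ) (α : ℝ) {n : ℕ} (σ : Equiv.Perm (Fin (n + 2)))
    (k : Fin (n + 2)) (ζ : Fin (n + 2) → (Fin d → ℝ) × ℝ) :
    StrangeJ 𝒜 w α k (ζ ∘ σ) ↔ StrangeJ 𝒜 w α (σ k) ζ := by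
  unfold StrangeJ
  have hD : (∑ j, w ((ζ ∘ σ) j).1) = ∑ j, w (ζ j).1 :=
    Equiv.sum_comp σ (fun j => w (ζ j).1)
  rw [hD]
  have hsum : strangeSum 𝒜 w k (ζ ∘ σ) = strangeSum 𝒜 w (σ k) ζ := by
    unfold strangeSum
    refine Finset.sum_nbij' (fun i => σ i) (fun i => σ.symm i) ?_ ?_ ?_ ?_ ?_
    · intro a ha
      simp only [Finset.mem_erase, Finset.mem_univ, and_true] at ha ⊢
      exact fun he => ha (σ.injective he)
    · intro b hb
      simp only [Finset.mem_erase, Finset.mem_univ, and_true] at hb ⊢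
      intro he
      apply hb
      rw [← he]
      simp
    · intro a _; simp
    · intro b _; simp
    · intro a _
      rw [rrJ_swap 𝒜 hsymm σ a k ζ, rrJ_swap 𝒜 hsymm σ k a ζ]
      rfl
  rw [hsum]

private lemma ite_ne_symm {β : Type*} [DecidableEq β] (x y : β) (r : ℝ) :
    (if x ≠ y then r else 0) = (if y ≠ x then r else 0) := by
  by_cases h : x = y
  · simp [h]
  · simp [h, Ne.symm h]

private lemma sum_erase_comm {β : Type*} [DecidableEq β] (T : Finset β) (G : β → β → ℝ) :
    ∑ k ∈ T, ∑ i ∈ T.erase k, G k i = ∑ k ∈ T, ∑ i ∈ T.erase k, G i k := by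
  have h : ∀ (H : β → β → ℝ), (∑ k ∈ T, ∑ i ∈ T.erase k, H k i)
      = ∑ k ∈ T, ∑ i ∈ T, if i ≠ k then H k i else 0 := by
    intro H
    refine Finset.sum_congr rfl fun k _ => ?_
    rw [← Finset.filter_ne', Finset.sum_filter]
  rw [h, h, Finset.sum_comm]
  refine Finset.sum_congr rfl fun k _ => Finset.sum_congr rfl fun i _ => ?_
  exact ite_ne_symm k i (G i k)

/-- The weighted tournament bound: the total weight of strange points is at most `2α` times
the total weight. -/
private lemma tournament (𝒜 : FittingAlg d) (w : (Fin d → ℝ) → ℝ)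
    (hw : ∀ x, 0 ≤ w x) {α : ℝ} (hα : 0 < α) {n : ℕ}
    (ζ : Fin (n + 2) → (Fin d → ℝ) × ℝ) :
    (∑ k, if StrangeJ 𝒜 w α k ζ then w (ζ k).1 else 0) ≤ 2 * α * ∑ j, w (ζ j).1 := by
  set D : ℝ := ∑ j, w (ζ j).1 with hDdef
  have hD0 : 0 ≤ D := Finset.sum_nonneg fun j _ => hw _
  set T : Finset (Fin (n + 2)) := univ.filter (fun k => StrangeJ 𝒜 w α k ζ) with hT
  have hLHS : (∑ k, if StrangeJ 𝒜 w α k ζ then w (ζ k).1 else 0)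
      = ∑ k ∈ T, w (ζ k).1 := (Finset.sum_filter _ _).symm
  rw [hLHS]
  set s := ∑ k ∈ T, w (ζ k).1 with hs
  have hs0 : 0 ≤ s := Finset.sum_nonneg fun k _ => hw _
  rcases eq_or_lt_of_le hs0 with h0 | hspos
  · rw [← h0]; positivity
  set b : Fin (n + 2) → Fin (n + 2) → ℝ :=
    fun i k => if rrJ 𝒜 i k ζ < rrJ 𝒜 k i ζ then w (ζ i).1 else 0 with hb
  have hbnn : ∀ i k, 0 ≤ b i k := by
    intro i k
    by_cases h : rrJ 𝒜 i k ζ < rrJ 𝒜 k i ζ <;> simp [hb, h, hw]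
  have hble : ∀ i k, b i k ≤ w (ζ i).1 := by
    intro i k
    by_cases h : rrJ 𝒜 i k ζ < rrJ 𝒜 k i ζ <;> simp [hb, h, hw]
  have hDs : (∑ i ∈ univ \ T, w (ζ i).1) = D - s := by
    have := Finset.sum_sdiff (Finset.subset_univ T) (f := fun i => w (ζ i).1)
    rw [hs, hDdef]
    linarith
  -- for each strange k, the per-point bound
  have hkey : ∀ k ∈ T, w (ζ k).1 * ((1 - α) * D) ≤
      w (ζ k).1 * (D - s) + ∑ i ∈ T.erase k, w (ζ k).1 * b i k := by
    intro k hk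
    have hstr : (1 - α) * D ≤ ∑ i ∈ univ.erase k, b i k := (Finset.mem_filter.mp hk).2
    have hsub : T.erase k ⊆ univ.erase k := fun i hi =>
      Finset.mem_erase.mpr ⟨(Finset.mem_erase.mp hi).1, Finset.mem_univ i⟩
    have hsplit : (∑ i ∈ univ.erase k, b i k)
        = (∑ i ∈ univ.erase k \ T.erase k, b i k) + ∑ i ∈ T.erase k, b i k :=
      (Finset.sum_sdiff hsub).symm
    have hrest : (∑ i ∈ univ.erase k \ T.erase k, b i k) ≤ D - s := by
      calc (∑ i ∈ univ.erase k \ T.erase k, b i k)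
          ≤ ∑ i ∈ univ.erase k \ T.erase k, w (ζ i).1 :=
            Finset.sum_le_sum fun i _ => hble i k
        _ ≤ ∑ i ∈ univ \ T, w (ζ i).1 := by
            refine Finset.sum_le_sum_of_subset_of_nonneg ?_ fun i _ _ => hw _
            intro i hi
            rw [Finset.mem_sdiff] at hi ⊢
            obtain ⟨hi1, hi2⟩ := hi
            refine ⟨Finset.mem_univ i, fun hiT => hi2 ?_⟩
            exact Finset.mem_erase.mpr ⟨(Finset.mem_erase.mp hi1).1, hiT⟩
        _ = D - s := hDs
    have h1 : (1 - α) * D ≤ (D - s) + ∑ i ∈ T.erase k, b i k := by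
      rw [hsplit] at hstr
      linarith
    calc w (ζ k).1 * ((1 - α) * D)
        ≤ w (ζ k).1 * ((D - s) + ∑ i ∈ T.erase k, b i k) :=
          mul_le_mul_of_nonneg_left h1 (hw _)
      _ = w (ζ k).1 * (D - s) + ∑ i ∈ T.erase k, w (ζ k).1 * b i k := by
          rw [mul_add, Finset.mul_sum]
  -- sum over strange points
  have hsumkey : s * ((1 - α) * D) ≤ s * (D - s) +
      ∑ k ∈ T, ∑ i ∈ T.erase k, w (ζ k).1 * b i k := by
    have h1 := Finset.sum_le_sum hkey
    rw [← Finset.sum_mul, ← hs] at h1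
    rw [Finset.sum_add_distrib, ← Finset.sum_mul, ← hs] at h1
    exact h1
  -- the double sum bound
  set W := ∑ k ∈ T, ∑ i ∈ T.erase k, w (ζ k).1 * b i k with hW
  have hW2 : 2 * W ≤ s * s := by
    have hswap : W = ∑ k ∈ T, ∑ i ∈ T.erase k, w (ζ i).1 * b k i :=
      sum_erase_comm T (fun k i => w (ζ k).1 * b i k)
    have hpair : ∀ k ∈ T, ∀ i ∈ T.erase k,
        w (ζ k).1 * b i k + w (ζ i).1 * b k i ≤ w (ζ k).1 * w (ζ i).1 := by
      intro k _ i _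
      by_cases h1 : rrJ 𝒜 i k ζ < rrJ 𝒜 k i ζ
      · have h2 : ¬ rrJ 𝒜 k i ζ < rrJ 𝒜 i k ζ := not_lt.2 h1.le
        simp [hb, h1, h2]
      · have hb1 : b i k = 0 := by simp [hb, h1]
        have := mul_le_mul_of_nonneg_left (hble k i) (hw (ζ i).1)
        rw [hb1]
        rw [mul_comm (w (ζ k).1) (w (ζ i).1)]
        linarith
    have h2W : 2 * W = ∑ k ∈ T, ∑ i ∈ T.erase k,
        (w (ζ k).1 * b i k + w (ζ i).1 * b k i) := by
      rw [two_mul]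
      nth_rewrite 1 [hW]
      nth_rewrite 1 [hswap]
      rw [← Finset.sum_add_distrib]
      exact Finset.sum_congr rfl fun k _ => (Finset.sum_add_distrib).symm
    rw [h2W]
    calc (∑ k ∈ T, ∑ i ∈ T.erase k, (w (ζ k).1 * b i k + w (ζ i).1 * b k i))
        ≤ ∑ k ∈ T, ∑ i ∈ T.erase k, w (ζ k).1 * w (ζ i).1 :=
          Finset.sum_le_sum fun k hk => Finset.sum_le_sum fun i hi => hpair k hk i hi
      _ ≤ ∑ k ∈ T, ∑ i ∈ T, w (ζ k).1 * w (ζ i).1 := by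
          refine Finset.sum_le_sum fun k _ => ?_
          refine Finset.sum_le_sum_of_subset_of_nonneg (Finset.erase_subset _ _)
            fun i _ _ => mul_nonneg (hw _) (hw _)
      _ = s * s := by
          rw [hs, Finset.sum_mul]
          exact Finset.sum_congr rfl fun k _ => by rw [Finset.mul_sum]
  nlinarith [hsumkey, hW2, hspos, hD0]

private lemma misc_strange {n : ℕ} (𝒜 : FittingAlg d)
    (hsymm : ∀ (m : ℕ) (σ : Equiv.Perm (Fin m)) (data : Fin m → (Fin d → ℝ) × ℝ),
      𝒜 m (data ∘ σ) = 𝒜 m data)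
    (w : (Fin d → ℝ) → ℝ) (hw : ∀ x, 0 ≤ w x) {α : ℝ}
    (train : Fin (n + 1) → (Fin d → ℝ) × ℝ) (z : (Fin d → ℝ) × ℝ) (hz : 0 < w z.1)
    (hmisc : ¬ (weightedLowerQuantile
          (fun i => looModel 𝒜 train i z.1 - looResid 𝒜 train i)
          (nlrWeight w train z.1) (nlrWeightTest w train z.1) α ≤ (z.2 : EReal)
        ∧ (z.2 : EReal) ≤ weightedUpperQuantile
          (fun i => looModel 𝒜 train i z.1 + looResid 𝒜 train i)
          (nlrWeight w train z.1) (1 - α))) :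
    StrangeJ 𝒜 w α (Fin.last (n + 1)) (Fin.snoc train z) := by
  have hS0 : 0 ≤ ∑ j, w (train j).1 := Finset.sum_nonneg fun j _ => hw _
  have hD : (0:ℝ) < ∑ j, w (train j).1 + w z.1 := by linarith
  have herase : ∀ f : Fin (n + 2) → ℝ,
      (∑ i ∈ (univ : Finset (Fin (n + 2))).erase (Fin.last (n + 1)), f i)
        = ∑ i : Fin (n + 1), f (Fin.castSucc i) := by
    intro f
    have h1 := Finset.sum_erase_add (univ : Finset (Fin (n + 2))) f
      (Finset.mem_univ (Fin.last (n + 1)))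
    have h2 := Fin.sum_univ_castSucc f
    linarith
  have hrr1 : ∀ i : Fin (n + 1),
      rrJ 𝒜 (Fin.castSucc i) (Fin.last (n + 1)) (Fin.snoc train z) = looResid 𝒜 train i := by
    intro i
    unfold rrJ looResid
    rw [← looModel_eq_gmodel 𝒜 hsymm train z i, Fin.snoc_castSucc]
  have hrr2 : ∀ i : Fin (n + 1),
      rrJ 𝒜 (Fin.last (n + 1)) (Fin.castSucc i) (Fin.snoc train z)
        = |z.2 - looModel 𝒜 train i z.1| := by
    intro i
    unfold rrJ
    rw [gmodel_symm, ← looModel_eq_gmodel 𝒜 hsymm train z i, Fin.snoc_last]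
  have hDsum : (∑ j, w ((Fin.snoc train z : Fin (n + 2) → (Fin d → ℝ) × ℝ) j).1)
      = ∑ j, w (train j).1 + w z.1 := by
    rw [Fin.sum_univ_castSucc]
    simp [Fin.snoc_castSucc, Fin.snoc_last]
  unfold StrangeJ strangeSum
  rw [hDsum, herase]
  have hterm : ∀ i : Fin (n + 1),
      (if rrJ 𝒜 (Fin.castSucc i) (Fin.last (n + 1)) (Fin.snoc train z) <
          rrJ 𝒜 (Fin.last (n + 1)) (Fin.castSucc i) (Fin.snoc train z)
        then w ((Fin.snoc train z : Fin (n + 2) → (Fin d → ℝ) × ℝ) (Fin.castSucc i)).1 else 0)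
        = (if looResid 𝒜 train i < |z.2 - looModel 𝒜 train i z.1|
            then w (train i).1 else 0) := by
    intro i
    rw [hrr1 i, hrr2 i, Fin.snoc_castSucc]
  rw [Finset.sum_congr rfl fun i _ => hterm i]
  have hresid_nonneg : ∀ i, (0:ℝ) ≤ looResid 𝒜 train i := fun i => abs_nonneg _
  rw [not_and_or] at hmisc
  rcases hmisc with hL | hU
  · -- lower-quantile miscoverage
    rw [not_le] at hL
    have hnotmem : ¬ (α ≤ nlrWeightTest w train z.1 +
        ∑ i ∈ univ.filter (fun i => looModel 𝒜 train i z.1 - looResid 𝒜 train i ≤ z.2),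
          nlrWeight w train z.1 i) := by
      intro hmem
      have hmem' : z.2 ∈ {t : ℝ | α ≤ nlrWeightTest w train z.1 +
          ∑ i ∈ univ.filter (fun i => looModel 𝒜 train i z.1 - looResid 𝒜 train i ≤ t),
            nlrWeight w train z.1 i} := hmem
      have hle : weightedLowerQuantile (fun i => looModel 𝒜 train i z.1 - looResid 𝒜 train i)
          (nlrWeight w train z.1) (nlrWeightTest w train z.1) α ≤ (z.2 : EReal) :=
        sInf_le (Set.mem_image_of_mem Real.toEReal hmem')
      exact absurd hle (not_le.mpr hL)
    rw [not_le] at hnotmem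
    simp only [nlrWeight, nlrWeightTest] at hnotmem
    rw [← Finset.sum_div, ← add_div, div_lt_iff₀ hD] at hnotmem
    -- hnotmem : w z.1 + ∑ (filter ≤) w < α * (∑ + w z.1)
    have hsplit := Finset.sum_filter_add_sum_filter_not (univ : Finset (Fin (n + 1)))
      (fun i => looModel 𝒜 train i z.1 - looResid 𝒜 train i ≤ z.2) (fun i => w (train i).1)
    have hge : (∑ i ∈ univ.filter
          (fun i => ¬ (looModel 𝒜 train i z.1 - looResid 𝒜 train i ≤ z.2)), w (train i).1)
        ≤ ∑ i, if looResid 𝒜 train i < |z.2 - looModel 𝒜 train i z.1|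
            then w (train i).1 else 0 := by
      rw [← Finset.sum_filter]
      refine Finset.sum_le_sum_of_subset_of_nonneg ?_ (fun i _ _ => hw _)
      intro i hi
      rw [Finset.mem_filter] at hi ⊢
      refine ⟨Finset.mem_univ i, ?_⟩
      have h3 := hi.2
      rw [not_le] at h3
      have h4 : looResid 𝒜 train i < looModel 𝒜 train i z.1 - z.2 := by linarith
      calc looResid 𝒜 train i < looModel 𝒜 train i z.1 - z.2 := h4
        _ = -(z.2 - looModel 𝒜 train i z.1) := by ring
        _ ≤ |z.2 - looModel 𝒜 train i z.1| := neg_le_abs _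
    linarith
  · -- upper-quantile miscoverage
    rw [not_le] at hU
    unfold weightedUpperQuantile at hU
    obtain ⟨x, hx, hxlt⟩ := sInf_lt_iff.mp hU
    obtain ⟨t, ht, rfl⟩ := hx
    have htlt : t < z.2 := EReal.coe_lt_coe_iff.mp hxlt
    rw [Set.mem_setOf_eq] at ht
    simp only [nlrWeight] at ht
    rw [← Finset.sum_div, le_div_iff₀ hD] at ht
    -- ht : (1 - α) * (∑ + w z.1) ≤ ∑ (filter ≤ t) w
    calc (1 - α) * (∑ j, w (train j).1 + w z.1)
        ≤ ∑ i ∈ univ.filter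
            (fun i => looModel 𝒜 train i z.1 + looResid 𝒜 train i ≤ t), w (train i).1 := ht
      _ ≤ ∑ i, if looResid 𝒜 train i < |z.2 - looModel 𝒜 train i z.1|
            then w (train i).1 else 0 := by
          rw [← Finset.sum_filter]
          refine Finset.sum_le_sum_of_subset_of_nonneg ?_ (fun i _ _ => hw _)
          intro i hi
          rw [Finset.mem_filter] at hi ⊢
          refine ⟨Finset.mem_univ i, ?_⟩
          have h3 := hi.2
          calc looResid 𝒜 train i < z.2 - looModel 𝒜 train i z.1 := by linarith
            _ ≤ |z.2 - looModel 𝒜 train i z.1| := le_abs_self _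

private lemma compProd_withDensity_left (PX : Measure (Fin d → ℝ)) [SFinite PX]
    (K : Kernel (Fin d → ℝ) ℝ) [IsMarkovKernel K] {ρ : (Fin d → ℝ) → ℝ≥0∞}
    (hρ : Measurable ρ) :
    (PX.withDensity ρ).compProd K
      = (PX.compProd K).withDensity (fun z => ρ z.1) := by
  ext s hs
  have hmeas' : Measurable (fun z : (Fin d → ℝ) × ℝ => ρ z.1) := hρ.comp measurable_fst
  rw [Measure.compProd_apply hs,
    lintegral_withDensity_eq_lintegral_mul _ hρ (Kernel.measurable_kernel_prodMk_left hs),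
    withDensity_apply _ hs, ← lintegral_indicator hs,
    Measure.lintegral_compProd (hmeas'.indicator hs)]
  refine lintegral_congr fun x => ?_
  have hpt : ∀ y : ℝ, s.indicator (fun z : (Fin d → ℝ) × ℝ => ρ z.1) (x, y)
      = (Prod.mk x ⁻¹' s).indicator (fun _ => ρ x) y := by
    intro y
    by_cases h : (x, y) ∈ s
    · rw [Set.indicator_of_mem h, Set.indicator_of_mem (Set.mem_preimage.mpr h)]
    · rw [Set.indicator_of_notMem h,
        Set.indicator_of_notMem (fun hc => h (Set.mem_preimage.mp hc))]
  calc (fun x => ρ x * (K x) (Prod.mk x ⁻¹' s)) x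
      = ∫⁻ y in Prod.mk x ⁻¹' s, ρ x ∂(K x) := by rw [setLIntegral_const]
    _ = ∫⁻ y, (Prod.mk x ⁻¹' s).indicator (fun _ => ρ x) y ∂(K x) :=
        (lintegral_indicator (measurable_prodMk_left hs) _).symm
    _ = ∫⁻ y, s.indicator (fun z : (Fin d → ℝ) × ℝ => ρ z.1) (x, y) ∂(K x) :=
        lintegral_congr fun y => (hpt y).symm

private lemma measurable_snoc {n : ℕ} :
    Measurable (fun ω : (Fin (n + 1) → (Fin d → ℝ) × ℝ) × ((Fin d → ℝ) × ℝ) =>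
      (Fin.snoc ω.1 ω.2 : Fin (n + 2) → (Fin d → ℝ) × ℝ)) := by
  refine measurable_pi_lambda _ (fun j => ?_)
  induction j using Fin.lastCases with
  | last =>
      have : (fun ω : (Fin (n + 1) → (Fin d → ℝ) × ℝ) × ((Fin d → ℝ) × ℝ) =>
          (Fin.snoc ω.1 ω.2 : Fin (n + 2) → (Fin d → ℝ) × ℝ) (Fin.last (n + 1)))
          = fun ω => ω.2 := by
        funext ω; rw [Fin.snoc_last]
      rw [this]; exact measurable_snd
  | cast i =>
      have : (fun ω : (Fin (n + 1) → (Fin d → ℝ) × ℝ) × ((Fin d → ℝ) × ℝ) =>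
          (Fin.snoc ω.1 ω.2 : Fin (n + 2) → (Fin d → ℝ) × ℝ) (Fin.castSucc i))
          = fun ω => ω.1 i := by
        funext ω; rw [Fin.snoc_castSucc]
      rw [this]; exact (measurable_pi_apply i).comp measurable_fst

private lemma measurable_gmodel_app {n : ℕ} (𝒜 : FittingAlg d)
    (hmeas : ∀ m : ℕ,
      Measurable fun q : (Fin m → (Fin d → ℝ) × ℝ) × (Fin d → ℝ) => 𝒜 m q.1 q.2)
    (i j k : Fin (n + 2)) :
    Measurable (fun ζ : Fin (n + 2) → (Fin d → ℝ) × ℝ => gmodel 𝒜 n i j ζ (ζ k).1) := by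
  unfold gmodel
  by_cases h : ({i, j}ᶜ : Finset (Fin (n + 2))).card = n
  · simp only [dif_pos h]
    have : (fun ζ : Fin (n + 2) → (Fin d → ℝ) × ℝ =>
        𝒜 n (ζ ∘ (({i, j}ᶜ : Finset (Fin (n + 2))).orderEmbOfFin h)) (ζ k).1)
        = (fun q : (Fin n → (Fin d → ℝ) × ℝ) × (Fin d → ℝ) => 𝒜 n q.1 q.2) ∘
          (fun ζ => (ζ ∘ (({i, j}ᶜ : Finset (Fin (n + 2))).orderEmbOfFin h), (ζ k).1)) := rfl
    rw [this]
    refine (hmeas n).comp (Measurable.prodMk ?_ ?_)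
    · exact measurable_pi_lambda _ (fun a => measurable_pi_apply _)
    · exact (measurable_fst.comp (measurable_pi_apply k))
  · simp only [dif_neg h]
    exact measurable_const

private lemma measurable_rrJ {n : ℕ} (𝒜 : FittingAlg d)
    (hmeas : ∀ m : ℕ,
      Measurable fun q : (Fin m → (Fin d → ℝ) × ℝ) × (Fin d → ℝ) => 𝒜 m q.1 q.2)
    (i j : Fin (n + 2)) :
    Measurable (fun ζ : Fin (n + 2) → (Fin d → ℝ) × ℝ => rrJ 𝒜 i j ζ) := by
  unfold rrJ
  exact ((measurable_snd.comp (measurable_pi_apply i)).sub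
    (measurable_gmodel_app 𝒜 hmeas i j i)).abs

private lemma measurable_strangeSet {n : ℕ} (𝒜 : FittingAlg d)
    (hmeas : ∀ m : ℕ,
      Measurable fun q : (Fin m → (Fin d → ℝ) × ℝ) × (Fin d → ℝ) => 𝒜 m q.1 q.2)
    (w : (Fin d → ℝ) → ℝ) (hwMeas : Measurable w) (α : ℝ) (k : Fin (n + 2)) :
    MeasurableSet {ζ : Fin (n + 2) → (Fin d → ℝ) × ℝ | StrangeJ 𝒜 w α k ζ} := by
  have hwz : ∀ i : Fin (n + 2), Measurable
      (fun ζ : Fin (n + 2) → (Fin d → ℝ) × ℝ => w (ζ i).1) :=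
    fun i => hwMeas.comp (measurable_fst.comp (measurable_pi_apply i))
  have hD : Measurable (fun ζ : Fin (n + 2) → (Fin d → ℝ) × ℝ =>
      (1 - α) * ∑ j, w (ζ j).1) :=
    (Finset.measurable_sum univ fun j _ => hwz j).const_mul _
  have hSS : Measurable (fun ζ : Fin (n + 2) → (Fin d → ℝ) × ℝ => strangeSum 𝒜 w k ζ) := by
    unfold strangeSum
    refine Finset.measurable_sum _ fun i _ => Measurable.ite ?_ (hwz i) measurable_const
    exact measurableSet_lt (measurable_rrJ 𝒜 hmeas i k) (measurable_rrJ 𝒜 hmeas k i)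
  exact measurableSet_le hD hSS

end JAWProof

/-- **Theorem 1 (JAW coverage under covariate shift).**
In the covariate shift setting — training points `(Xᵢ,Yᵢ)`, `i = 1,…,n+1`, i.i.d. with
`Xᵢ ~ P_X`, `Yᵢ | Xᵢ ~ P_{Y|X}`, and an independent test point with `X ~ P̃_X`,
`Y | X ~ P_{Y|X}` — if `P̃_X` is absolutely continuous with respect to `P_X` with
likelihood ratio `w` (i.e. `P̃_X = w · P_X`) and the model-fitting algorithm `𝒜` is
symmetric (and measurable), then for every `α ∈ (0,1)` the JAW prediction interval
satisfies `ℙ{Y_test ∈ Ĉ^JAW_α(X_test)} = ℙ{Q⁻_α ≤ Y_test ≤ Q⁺_{1-α}} ≥ 1 - 2α`, the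
probability being over the joint draw of the training points and the test point. -/
theorem jaw_coverage (d n : ℕ)
    (PX PtX : Measure (Fin d → ℝ)) [IsProbabilityMeasure PX] [IsProbabilityMeasure PtX]
    (K : Kernel (Fin d → ℝ) ℝ) [IsMarkovKernel K]
    (w : (Fin d → ℝ) → ℝ) (hwMeas : Measurable w) (hwNonneg : ∀ x, 0 ≤ w x)
    (hac : PtX = PX.withDensity fun x => ENNReal.ofReal (w x))
    (𝒜 : FittingAlg d)
    (hsymm : ∀ (m : ℕ) (σ : Equiv.Perm (Fin m)) (data : Fin m → (Fin d → ℝ) × ℝ),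
      𝒜 m (data ∘ σ) = 𝒜 m data)
    (hmeas : ∀ m : ℕ,
      Measurable fun q : (Fin m → (Fin d → ℝ) × ℝ) × (Fin d → ℝ) => 𝒜 m q.1 q.2)
    (α : ℝ) (hα : α ∈ Set.Ioo (0 : ℝ) 1) :
    ENNReal.ofReal (1 - 2 * α) ≤
      (jointLaw PX PtX K)
        {ω : (Fin (n + 1) → (Fin d → ℝ) × ℝ) × ((Fin d → ℝ) × ℝ) |
          weightedLowerQuantile (fun i => looModel 𝒜 ω.1 i ω.2.1 - looResid 𝒜 ω.1 i)
              (nlrWeight w ω.1 ω.2.1) (nlrWeightTest w ω.1 ω.2.1) α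
            ≤ (ω.2.2 : EReal)
          ∧ (ω.2.2 : EReal) ≤
              weightedUpperQuantile
                (fun i => looModel 𝒜 ω.1 i ω.2.1 + looResid 𝒜 ω.1 i)
                (nlrWeight w ω.1 ω.2.1) (1 - α)} := by
  obtain ⟨hα0, hα1⟩ := hα
  have hρmeas : Measurable (fun x : Fin d → ℝ => ENNReal.ofReal (w x)) :=
    hwMeas.ennreal_ofReal
  -- the event set, the zero-weight set and the strange-test-point set
  set E : Set ((Fin (n + 1) → (Fin d → ℝ) × ℝ) × ((Fin d → ℝ) × ℝ)) :=
    {ω | weightedLowerQuantile (fun i => looModel 𝒜 ω.1 i ω.2.1 - looResid 𝒜 ω.1 i)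
          (nlrWeight w ω.1 ω.2.1) (nlrWeightTest w ω.1 ω.2.1) α ≤ (ω.2.2 : EReal)
        ∧ (ω.2.2 : EReal) ≤ weightedUpperQuantile
            (fun i => looModel 𝒜 ω.1 i ω.2.1 + looResid 𝒜 ω.1 i)
            (nlrWeight w ω.1 ω.2.1) (1 - α)} with hE
  set Z : Set ((Fin (n + 1) → (Fin d → ℝ) × ℝ) × ((Fin d → ℝ) × ℝ)) :=
    {ω | ¬ (0 < w ω.2.1)} with hZ
  set SN : Set ((Fin (n + 1) → (Fin d → ℝ) × ℝ) × ((Fin d → ℝ) × ℝ)) :=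
    {ω | StrangeJ 𝒜 w α (Fin.last (n + 1)) (Fin.snoc ω.1 ω.2)} with hSN
  have hsubset : Eᶜ ⊆ Z ∪ SN := by
    intro ω hω
    by_cases hz : 0 < w ω.2.1
    · exact Or.inr (misc_strange 𝒜 hsymm w hwNonneg ω.1 ω.2 hz hω)
    · exact Or.inl hz
  -- probability instances
  haveI : IsProbabilityMeasure (PX.compProd K) := by infer_instance
  have hprob : IsProbabilityMeasure (jointLaw (n := n) PX PtX K) := by
    unfold jointLaw; infer_instance
  -- the density identity
  have hPt : PtX.compProd K
      = (PX.compProd K).withDensity (fun z => ENNReal.ofReal (w z.1)) := by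
    rw [hac]
    exact compProd_withDensity_left PX K hρmeas
  -- measure of the zero-weight set
  have hZmeas : MeasurableSet {z : (Fin d → ℝ) × ℝ | ¬ (0 < w z.1)} := by
    have : Measurable (fun z : (Fin d → ℝ) × ℝ => w z.1) := hwMeas.comp measurable_fst
    exact (measurableSet_lt measurable_const this).compl
  have hZzero : jointLaw (n := n) PX PtX K Z = 0 := by
    have hZeq : Z = (Set.univ : Set (Fin (n + 1) → (Fin d → ℝ) × ℝ)) ×ˢ
        {z : (Fin d → ℝ) × ℝ | ¬ (0 < w z.1)} := by
      ext ω
      simp [hZ, Set.mem_prod]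
    unfold jointLaw
    rw [hZeq, Measure.prod_prod, measure_univ, one_mul, hPt, withDensity_apply _ hZmeas]
    have hzero : ∀ z ∈ {z : (Fin d → ℝ) × ℝ | ¬ (0 < w z.1)},
        ENNReal.ofReal (w z.1) = 0 := by
      intro z hz
      rw [Set.mem_setOf_eq, not_lt] at hz
      rw [ENNReal.ofReal_eq_zero.mpr hz]
    calc ∫⁻ z in {z : (Fin d → ℝ) × ℝ | ¬ (0 < w z.1)}, ENNReal.ofReal (w z.1)
          ∂(PX.compProd K)
        = ∫⁻ _ in {z : (Fin d → ℝ) × ℝ | ¬ (0 < w z.1)}, 0 ∂(PX.compProd K) :=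
          setLIntegral_congr_fun hZmeas hzero
      _ = 0 := by simp
  -- the strange indicator functions
  set H : Fin (n + 2) → (Fin (n + 2) → (Fin d → ℝ) × ℝ) → ℝ≥0∞ :=
    fun k => Set.indicator {ζ | StrangeJ 𝒜 w α k ζ}
      (fun ζ => ENNReal.ofReal (w (ζ k).1)) with hH
  have hHmeas : ∀ k, Measurable (H k) := by
    intro k
    exact Measurable.indicator
      ((hwMeas.comp (measurable_fst.comp (measurable_pi_apply k))).ennreal_ofReal)
      (measurable_strangeSet 𝒜 hmeas w hwMeas α k)
  have hSNmeas : MeasurableSet SN :=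
    measurable_snoc (measurable_strangeSet 𝒜 hmeas w hwMeas α (Fin.last (n + 1)))
  -- rewrite the measure of SN as an integral over the symmetric product measure
  have hGmeas : Measurable (fun p : ((Fin d → ℝ) × ℝ) × (Fin (n + 1) → (Fin d → ℝ) × ℝ) =>
      H (Fin.last (n + 1)) (Fin.snoc p.2 p.1)) := by
    have hsm : Measurable (fun p : ((Fin d → ℝ) × ℝ) × (Fin (n + 1) → (Fin d → ℝ) × ℝ) =>
        (Fin.snoc p.2 p.1 : Fin (n + 2) → (Fin d → ℝ) × ℝ)) :=
      measurable_snoc.comp (measurable_snd.prodMk measurable_fst)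
    exact (hHmeas _).comp hsm
  have hμSN : jointLaw (n := n) PX PtX K SN
      = ∫⁻ ζ, H (Fin.last (n + 1)) ζ
          ∂(Measure.pi fun _ : Fin (n + 2) => PX.compProd K) := by
    have hstep1 : jointLaw (n := n) PX PtX K SN
        = ∫⁻ t, ∫⁻ z, H (Fin.last (n + 1)) (Fin.snoc t z)
            ∂(PX.compProd K) ∂(Measure.pi fun _ : Fin (n + 1) => PX.compProd K) := by
      unfold jointLaw
      rw [Measure.prod_apply hSNmeas]
      refine lintegral_congr fun t => ?_
      rw [hPt, withDensity_apply _ (measurable_prodMk_left hSNmeas),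
        ← lintegral_indicator (measurable_prodMk_left hSNmeas)]
      refine lintegral_congr fun z => ?_
      by_cases h : StrangeJ 𝒜 w α (Fin.last (n + 1)) (Fin.snoc t z)
      · rw [Set.indicator_of_mem (show z ∈ Prod.mk t ⁻¹' SN from h)]
        simp only [hH]
        rw [Set.indicator_of_mem (show Fin.snoc t z ∈
          {ζ : Fin (n + 2) → (Fin d → ℝ) × ℝ | StrangeJ 𝒜 w α (Fin.last (n + 1)) ζ} from h),
          Fin.snoc_last]
      · rw [Set.indicator_of_notMem (show z ∉ Prod.mk t ⁻¹' SN from h)]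
        simp only [hH]
        rw [Set.indicator_of_notMem (show Fin.snoc t z ∉
          {ζ : Fin (n + 2) → (Fin d → ℝ) × ℝ | StrangeJ 𝒜 w α (Fin.last (n + 1)) ζ} from h)]
    have hstep3 : (∫⁻ p, H (Fin.last (n + 1)) (Fin.snoc p.2 p.1)
          ∂((PX.compProd K).prod (Measure.pi fun _ : Fin (n + 1) => PX.compProd K)))
        = ∫⁻ t, ∫⁻ z, H (Fin.last (n + 1)) (Fin.snoc t z)
            ∂(PX.compProd K) ∂(Measure.pi fun _ : Fin (n + 1) => PX.compProd K) :=
      lintegral_prod_symm _ hGmeas.aemeasurable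
    have mp2 := measurePreserving_piFinSuccAbove
      (fun _ : Fin (n + 2) => PX.compProd K) (Fin.last (n + 1))
    have hcomp2 : (∫⁻ ζ, H (Fin.last (n + 1))
          (Fin.snoc (fun j => ζ ((Fin.last (n + 1)).succAbove j)) (ζ (Fin.last (n + 1))))
          ∂(Measure.pi fun _ : Fin (n + 2) => PX.compProd K))
        = ∫⁻ p, H (Fin.last (n + 1)) (Fin.snoc p.2 p.1)
            ∂((PX.compProd K).prod (Measure.pi fun _ : Fin (n + 1) => PX.compProd K)) := by
      have h0 := mp2.lintegral_comp hGmeas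
      exact (lintegral_congr fun ζ => by
        simp only [MeasurableEquiv.piFinSuccAbove_apply, Fin.insertNthEquiv_symm_apply]
        rfl).trans h0
    have hGe : ∀ ζ : Fin (n + 2) → (Fin d → ℝ) × ℝ,
        H (Fin.last (n + 1))
          (Fin.snoc (fun j => ζ ((Fin.last (n + 1)).succAbove j)) (ζ (Fin.last (n + 1))))
        = H (Fin.last (n + 1)) ζ := by
      intro ζ
      congr 1
      funext j
      induction j using Fin.lastCases with
      | last => rw [Fin.snoc_last]
      | cast i => rw [Fin.snoc_castSucc, Fin.succAbove_last_apply]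
    exact hstep1.trans (hstep3.symm.trans (hcomp2.symm.trans (lintegral_congr hGe)))
  -- symmetry: all coordinates contribute equally
  have hswapk : ∀ k, ∫⁻ ζ, H (Fin.last (n + 1)) ζ
        ∂(Measure.pi fun _ : Fin (n + 2) => PX.compProd K)
      = ∫⁻ ζ, H k ζ ∂(Measure.pi fun _ : Fin (n + 2) => PX.compProd K) := by
    intro k
    set σ : Equiv.Perm (Fin (n + 2)) := Equiv.swap k (Fin.last (n + 1)) with hσ
    have mp := (measurePreserving_piCongrLeft
      (fun _ : Fin (n + 2) => PX.compProd K) σ).symm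
    have hcomp := mp.lintegral_comp (hHmeas (Fin.last (n + 1)))
    have hid : ∀ ζ : Fin (n + 2) → (Fin d → ℝ) × ℝ, H (Fin.last (n + 1))
        ((MeasurableEquiv.piCongrLeft (fun _ : Fin (n + 2) => (Fin d → ℝ) × ℝ) σ).symm ζ)
        = H k ζ := by
      intro ζ
      have happ : (MeasurableEquiv.piCongrLeft
          (fun _ : Fin (n + 2) => (Fin d → ℝ) × ℝ) σ).symm ζ = ζ ∘ σ := by
        funext a
        rfl
      rw [happ]
      have hstr : StrangeJ 𝒜 w α (Fin.last (n + 1)) (ζ ∘ σ) ↔ StrangeJ 𝒜 w α k ζ := by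
        rw [strange_swap 𝒜 hsymm w α σ (Fin.last (n + 1)) ζ,
          show σ (Fin.last (n + 1)) = k from Equiv.swap_apply_right k (Fin.last (n + 1))]
      have hval : ((ζ ∘ σ) (Fin.last (n + 1))) = ζ k := by
        simp [hσ, Equiv.swap_apply_right]
      by_cases h : StrangeJ 𝒜 w α k ζ
      · simp only [hH]
        rw [Set.indicator_of_mem (show (ζ ∘ σ) ∈
            {ζ : Fin (n + 2) → (Fin d → ℝ) × ℝ | StrangeJ 𝒜 w α (Fin.last (n + 1)) ζ}
            from hstr.mpr h),
          Set.indicator_of_mem (show ζ ∈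
            {ζ : Fin (n + 2) → (Fin d → ℝ) × ℝ | StrangeJ 𝒜 w α k ζ} from h), hval]
      · simp only [hH]
        rw [Set.indicator_of_notMem (show (ζ ∘ σ) ∉
            {ζ : Fin (n + 2) → (Fin d → ℝ) × ℝ | StrangeJ 𝒜 w α (Fin.last (n + 1)) ζ}
            from fun hc => h (hstr.mp hc)),
          Set.indicator_of_notMem (show ζ ∉
            {ζ : Fin (n + 2) → (Fin d → ℝ) × ℝ | StrangeJ 𝒜 w α k ζ} from h)]
    rw [← hcomp]
    exact lintegral_congr hid
  -- each coordinate has total density mass one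
  have hν1 : ∫⁻ z, ENNReal.ofReal (w z.1) ∂(PX.compProd K) = 1 := by
    rw [Measure.lintegral_compProd (show Measurable
      (fun z : (Fin d → ℝ) × ℝ => ENNReal.ofReal (w z.1)) from hρmeas.comp measurable_fst)]
    have hinner : ∀ x : Fin d → ℝ, (∫⁻ _y, ENNReal.ofReal (w x) ∂(K x))
        = ENNReal.ofReal (w x) := by
      intro x
      rw [lintegral_const, measure_univ, mul_one]
    rw [lintegral_congr hinner]
    calc ∫⁻ x, ENNReal.ofReal (w x) ∂PX
        = (PX.withDensity fun x => ENNReal.ofReal (w x)) Set.univ := by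
          rw [withDensity_apply _ MeasurableSet.univ, Measure.restrict_univ]
      _ = PtX Set.univ := by rw [← hac]
      _ = 1 := measure_univ
  have hone : ∀ k : Fin (n + 2), ∫⁻ ζ, ENNReal.ofReal (w (ζ k).1)
      ∂(Measure.pi fun _ : Fin (n + 2) => PX.compProd K) = 1 := by
    intro k
    have mpk := measurePreserving_piFinSuccAbove
      (fun _ : Fin (n + 2) => PX.compProd K) k
    have hfmeas : Measurable (fun p : ((Fin d → ℝ) × ℝ) × (Fin (n + 1) → (Fin d → ℝ) × ℝ) =>
        ENNReal.ofReal (w p.1.1)) := hρmeas.comp (measurable_fst.comp measurable_fst)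
    have hcomp : (∫⁻ ζ, ENNReal.ofReal (w (ζ k).1)
          ∂(Measure.pi fun _ : Fin (n + 2) => PX.compProd K))
        = ∫⁻ p, ENNReal.ofReal (w p.1.1)
            ∂((PX.compProd K).prod (Measure.pi fun _ : Fin (n + 1) => PX.compProd K)) := by
      have h0 := mpk.lintegral_comp hfmeas
      exact (lintegral_congr fun ζ => by
        simp only [MeasurableEquiv.piFinSuccAbove_apply, Fin.insertNthEquiv_symm_apply]).trans h0
    rw [hcomp, lintegral_prod _ hfmeas.aemeasurable]
    have hinner : ∀ x : (Fin d → ℝ) × ℝ,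
        (∫⁻ _y, ENNReal.ofReal (w x.1) ∂(Measure.pi fun _ : Fin (n + 1) => PX.compProd K))
        = ENNReal.ofReal (w x.1) := by
      intro x
      rw [lintegral_const, measure_univ, mul_one]
    rw [lintegral_congr hinner, hν1]
  -- the tournament bound integrated
  have hSNbound : jointLaw (n := n) PX PtX K SN ≤ ENNReal.ofReal (2 * α) := by
    have hHsum : ∀ ζ : Fin (n + 2) → (Fin d → ℝ) × ℝ, (∑ k, H k ζ)
        ≤ ENNReal.ofReal (2 * α) * ENNReal.ofReal (∑ j, w (ζ j).1) := by
      intro ζ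
      have hHk : ∀ k, H k ζ
          = ENNReal.ofReal (if StrangeJ 𝒜 w α k ζ then w (ζ k).1 else 0) := by
        intro k
        by_cases h : StrangeJ 𝒜 w α k ζ
        · simp only [hH]
          rw [Set.indicator_of_mem (show ζ ∈
            {ζ : Fin (n + 2) → (Fin d → ℝ) × ℝ | StrangeJ 𝒜 w α k ζ} from h), if_pos h]
        · simp only [hH]
          rw [Set.indicator_of_notMem (show ζ ∉
            {ζ : Fin (n + 2) → (Fin d → ℝ) × ℝ | StrangeJ 𝒜 w α k ζ} from h),
            if_neg h, ENNReal.ofReal_zero]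
      calc (∑ k, H k ζ)
          = ∑ k, ENNReal.ofReal (if StrangeJ 𝒜 w α k ζ then w (ζ k).1 else 0) :=
            Finset.sum_congr rfl fun k _ => hHk k
        _ = ENNReal.ofReal (∑ k, if StrangeJ 𝒜 w α k ζ then w (ζ k).1 else 0) := by
            refine (ENNReal.ofReal_sum_of_nonneg fun k _ => ?_).symm
            by_cases h : StrangeJ 𝒜 w α k ζ
            · rw [if_pos h]; exact hwNonneg _
            · rw [if_neg h]
        _ ≤ ENNReal.ofReal (2 * α * ∑ j, w (ζ j).1) :=
            ENNReal.ofReal_le_ofReal (tournament 𝒜 w hwNonneg hα0 ζ)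
        _ = ENNReal.ofReal (2 * α) * ENNReal.ofReal (∑ j, w (ζ j).1) :=
            ENNReal.ofReal_mul (by positivity)
    have hDmeas : Measurable (fun ζ : Fin (n + 2) → (Fin d → ℝ) × ℝ =>
        ENNReal.ofReal (∑ j, w (ζ j).1)) :=
      (Finset.measurable_sum univ fun j _ =>
        hwMeas.comp (measurable_fst.comp (measurable_pi_apply j))).ennreal_ofReal
    have hDint : (∫⁻ ζ, ENNReal.ofReal (∑ j, w (ζ j).1)
        ∂(Measure.pi fun _ : Fin (n + 2) => PX.compProd K)) = ((n + 2 : ℕ) : ℝ≥0∞) := by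
      have hsum : ∀ ζ : Fin (n + 2) → (Fin d → ℝ) × ℝ, ENNReal.ofReal (∑ j, w (ζ j).1)
          = ∑ j, ENNReal.ofReal (w (ζ j).1) :=
        fun ζ => ENNReal.ofReal_sum_of_nonneg fun j _ => hwNonneg _
      rw [lintegral_congr hsum, lintegral_finset_sum
        (f := fun (j : Fin (n + 2)) (ζ : Fin (n + 2) → (Fin d → ℝ) × ℝ) =>
          ENNReal.ofReal (w (ζ j).1)) _ (fun j _ =>
        (hwMeas.comp (measurable_fst.comp (measurable_pi_apply j))).ennreal_ofReal)]
      rw [Finset.sum_congr rfl fun k _ => hone k]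
      simp
    have hchain : ((n + 2 : ℕ) : ℝ≥0∞) * jointLaw (n := n) PX PtX K SN
        ≤ ((n + 2 : ℕ) : ℝ≥0∞) * ENNReal.ofReal (2 * α) := by
      calc ((n + 2 : ℕ) : ℝ≥0∞) * jointLaw (n := n) PX PtX K SN
          = ∑ _k : Fin (n + 2), jointLaw (n := n) PX PtX K SN := by
            rw [Finset.sum_const, Finset.card_univ, Fintype.card_fin, nsmul_eq_mul]
        _ = ∑ k : Fin (n + 2), ∫⁻ ζ, H k ζ
              ∂(Measure.pi fun _ : Fin (n + 2) => PX.compProd K) := by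
            refine Finset.sum_congr rfl fun k _ => ?_
            rw [hμSN, hswapk k]
        _ = ∫⁻ ζ, ∑ k, H k ζ ∂(Measure.pi fun _ : Fin (n + 2) => PX.compProd K) :=
            (lintegral_finset_sum _ fun k _ => hHmeas k).symm
        _ ≤ ∫⁻ ζ, ENNReal.ofReal (2 * α) * ENNReal.ofReal (∑ j, w (ζ j).1)
              ∂(Measure.pi fun _ : Fin (n + 2) => PX.compProd K) :=
            lintegral_mono hHsum
        _ = ENNReal.ofReal (2 * α) * ∫⁻ ζ, ENNReal.ofReal (∑ j, w (ζ j).1)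
              ∂(Measure.pi fun _ : Fin (n + 2) => PX.compProd K) :=
            lintegral_const_mul _ hDmeas
        _ = ((n + 2 : ℕ) : ℝ≥0∞) * ENNReal.ofReal (2 * α) := by
            rw [hDint, mul_comm]
    have hne0 : ((n + 2 : ℕ) : ℝ≥0∞) ≠ 0 := by simp
    have hnetop : ((n + 2 : ℕ) : ℝ≥0∞) ≠ ⊤ := ENNReal.natCast_ne_top _
    exact (ENNReal.mul_le_mul_iff_right hne0 hnetop).mp hchain
  -- assembly
  have hEc : jointLaw (n := n) PX PtX K Eᶜ ≤ ENNReal.ofReal (2 * α) := by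
    calc jointLaw (n := n) PX PtX K Eᶜ
        ≤ jointLaw (n := n) PX PtX K (Z ∪ SN) := measure_mono hsubset
      _ ≤ jointLaw (n := n) PX PtX K Z + jointLaw (n := n) PX PtX K SN :=
          measure_union_le Z SN
      _ ≤ ENNReal.ofReal (2 * α) := by rw [hZzero, zero_add]; exact hSNbound
  have h1 : (1 : ℝ≥0∞) ≤ jointLaw (n := n) PX PtX K E
      + jointLaw (n := n) PX PtX K Eᶜ := by
    have := measure_union_le (μ := jointLaw (n := n) PX PtX K) E Eᶜ
    rw [Set.union_compl_self, measure_univ] at this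
    exact this
  calc ENNReal.ofReal (1 - 2 * α)
      = ENNReal.ofReal 1 - ENNReal.ofReal (2 * α) :=
        ENNReal.ofReal_sub 1 (by positivity)
    _ = 1 - ENNReal.ofReal (2 * α) := by rw [ENNReal.ofReal_one]
    _ ≤ jointLaw (n := n) PX PtX K E := by
        rw [tsub_le_iff_right]
        calc (1 : ℝ≥0∞) ≤ jointLaw (n := n) PX PtX K E
              + jointLaw (n := n) PX PtX K Eᶜ := h1
          _ ≤ jointLaw (n := n) PX PtX K E + ENNReal.ofReal (2 * α) :=
              add_le_add_right hEc _
end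

section
/- For any α ∈ [0,1], any asymmetric relation B on ι = {1,…,n+1}, and any nonnegative weights p summing to 1, the total weight of strange points satisfies Σ_{i ∈ S} p i ≤ 2α. -/
open Finset

/-- **Total weight of strange points is at most 2α.**
For any α ∈ [0,1], any asymmetric relation `B` on `ι = Fin (n+1)`, and any nonnegative
weights `p` summing to 1, the set of strange points
`S = {i : 0 < p i ∧ ∑_{j : B i j} p j ≥ 1 - α}` satisfies `∑ i ∈ S, p i ≤ 2α`. -/
theorem strange_points_total_weight_le (n : ℕ) (α : ℝ) (hα : α ∈ Set.Icc (0 : ℝ) 1)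
    (B : Fin (n + 1) → Fin (n + 1) → Prop) [DecidableRel B]
    (hB : ∀ i j, B i j → ¬ B j i)
    (p : Fin (n + 1) → ℝ) (hp : ∀ i, 0 ≤ p i) (hsum : ∑ i, p i = 1) :
    ∑ i ∈ univ.filter
        (fun i => 0 < p i ∧ 1 - α ≤ ∑ j ∈ univ.filter (fun j => B i j), p j), p i
      ≤ 2 * α := by
  classical
  obtain ⟨hα0, hα1⟩ := hα
  set S := univ.filter
      (fun i => 0 < p i ∧ 1 - α ≤ ∑ j ∈ univ.filter (fun j => B i j), p j) with hS
  set w := ∑ i ∈ S, p i with hw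
  have hw0 : 0 ≤ w := Finset.sum_nonneg fun i _ => hp i
  have hw1 : w ≤ 1 := by
    rw [hw, ← hsum]
    exact Finset.sum_le_sum_of_subset_of_nonneg (Finset.filter_subset _ _)
      (fun i _ _ => hp i)
  set f : Fin (n + 1) → Fin (n + 1) → ℝ := fun i j => if B i j then p i * p j else 0
    with hf
  have hf_nonneg : ∀ i j, 0 ≤ f i j := by
    intro i j; simp only [hf]; split <;> [exact mul_nonneg (hp i) (hp j); rfl]
  have hf_le : ∀ i j, f i j ≤ p i * p j := by
    intro i j; simp only [hf]; split
    · exact le_rfl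
    · exact mul_nonneg (hp i) (hp j)
  -- key lower bound
  have key1 : (1 - α) * w ≤ ∑ i ∈ S, ∑ j, f i j := by
    have : ∀ i ∈ S, (1 - α) * p i ≤ ∑ j, f i j := by
      intro i hi
      simp only [hS, Finset.mem_filter] at hi
      have h1 : ∑ j, f i j = p i * ∑ j ∈ univ.filter (fun j => B i j), p j := by
        rw [Finset.mul_sum, Finset.sum_filter]
      rw [h1]
      have := hi.2.2
      nlinarith [hp i, hi.2.1]
    calc (1 - α) * w = ∑ i ∈ S, (1 - α) * p i := by rw [hw, Finset.mul_sum]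
    _ ≤ _ := Finset.sum_le_sum this
  -- split the inner sum
  have split : ∀ i, ∑ j, f i j = ∑ j ∈ S, f i j + ∑ j ∈ Sᶜ, f i j := by
    intro i; rw [Finset.sum_add_sum_compl]
  -- bound the S-S part
  have hSS : ∑ i ∈ S, ∑ j ∈ S, f i j ≤ w * w / 2 := by
    have h2 : 2 * (∑ i ∈ S, ∑ j ∈ S, f i j) = ∑ i ∈ S, ∑ j ∈ S, (f i j + f j i) := by
      rw [two_mul]
      nth_rewrite 2 [Finset.sum_comm]
      rw [← Finset.sum_add_distrib]
      apply Finset.sum_congr rfl; intro i _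
      rw [← Finset.sum_add_distrib]
    have h3 : ∑ i ∈ S, ∑ j ∈ S, (f i j + f j i) ≤ ∑ i ∈ S, ∑ j ∈ S, p i * p j := by
      apply Finset.sum_le_sum; intro i _
      apply Finset.sum_le_sum; intro j _
      simp only [hf]
      by_cases hij : B i j
      · have := hB i j hij
        simp [hij, this]
      · by_cases hji : B j i
        · simp [hij, hji, mul_comm]
        · simp [hij, hji]; exact mul_nonneg (hp i) (hp j)
    have h4 : ∑ i ∈ S, ∑ j ∈ S, p i * p j = w * w := by
      rw [hw, Finset.sum_mul]
      apply Finset.sum_congr rfl; intro i _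
      rw [Finset.mul_sum]
    linarith
  -- bound the S-Sᶜ part
  have hSC : ∑ i ∈ S, ∑ j ∈ Sᶜ, f i j ≤ w * (1 - w) := by
    have h5 : ∑ j ∈ Sᶜ, p j = 1 - w := by
      have := Finset.sum_add_sum_compl S p
      rw [hsum] at this
      linarith
    calc ∑ i ∈ S, ∑ j ∈ Sᶜ, f i j ≤ ∑ i ∈ S, ∑ j ∈ Sᶜ, p i * p j := by
          apply Finset.sum_le_sum; intro i _
          exact Finset.sum_le_sum fun j _ => hf_le i j
    _ = w * (1 - w) := by
          rw [hw, Finset.sum_mul]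
          apply Finset.sum_congr rfl; intro i _
          rw [← Finset.mul_sum, h5, hw]
  have key2 : (1 - α) * w ≤ w * w / 2 + w * (1 - w) := by
    calc (1 - α) * w ≤ ∑ i ∈ S, ∑ j, f i j := key1
    _ = ∑ i ∈ S, ∑ j ∈ S, f i j + ∑ i ∈ S, ∑ j ∈ Sᶜ, f i j := by
          rw [← Finset.sum_add_distrib]
          exact Finset.sum_congr rfl fun i _ => split i
    _ ≤ w * w / 2 + w * (1 - w) := add_le_add hSS hSC
  -- conclude
  rcases eq_or_lt_of_le hw0 with h | h
  · linarith
  · nlinarith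
end

section
/- For any α ∈ [0,1], any asymmetric relation B on ι = {1,…,n+1}, and any nonnegative weights p summing to 1, if the total weight of strange points s = Σ_{i ∈ S} p i is strictly positive, then s ≤ 2α − (Σ_{i ∈ S} (p i)²)/s. -/
open Finset

/-- **Refined bound on the total weight of strange points.**
For any α ∈ [0,1], any asymmetric relation `B` on `ι = Fin (n+1)`, and any nonnegative
weights `p` summing to 1, if the total weight `s = ∑ i ∈ S, p i` of the strange points
`S = {i : 0 < p i ∧ ∑_{j : B i j} p j ≥ 1 - α}` is strictly positive, then
`s ≤ 2α - (∑ i ∈ S, (p i)²) / s`. -/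
theorem strange_points_total_weight_refined (n : ℕ) (α : ℝ) (hα : α ∈ Set.Icc (0 : ℝ) 1)
    (B : Fin (n + 1) → Fin (n + 1) → Prop) [DecidableRel B]
    (hB : ∀ i j, B i j → ¬ B j i)
    (p : Fin (n + 1) → ℝ) (hp : ∀ i, 0 ≤ p i) (hsum : ∑ i, p i = 1)
    (S : Finset (Fin (n + 1)))
    (hS : S = univ.filter
      (fun i => 0 < p i ∧ 1 - α ≤ ∑ j ∈ univ.filter (fun j => B i j), p j))
    (hpos : 0 < ∑ i ∈ S, p i) :
    ∑ i ∈ S, p i ≤ 2 * α - (∑ i ∈ S, (p i) ^ 2) / (∑ i ∈ S, p i) := by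
  classical
  set s : ℝ := ∑ i ∈ S, p i with hs
  set q : ℝ := ∑ i ∈ S, (p i) ^ 2 with hq
  set f : Fin (n+1) → Fin (n+1) → ℝ := fun i j => if B i j then p i * p j else 0 with hf
  have hmem : ∀ i ∈ S, 0 < p i ∧ 1 - α ≤ ∑ j ∈ univ.filter (fun j => B i j), p j := by
    intro i hi
    rw [hS, Finset.mem_filter] at hi
    exact hi.2
  have hcompl : ∑ i ∈ Sᶜ, p i = 1 - s := by
    have := Finset.sum_add_sum_compl S p
    rw [hsum] at this
    linarith
  -- Step 1
  have h1 : (1 - α) * s ≤ ∑ i ∈ S, p i * (∑ j ∈ univ.filter (fun j => B i j), p j) := by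
    rw [hs, Finset.mul_sum]
    apply Finset.sum_le_sum
    intro i hi
    obtain ⟨hp1, hp2⟩ := hmem i hi
    calc (1 - α) * p i = p i * (1 - α) := by ring
    _ ≤ p i * (∑ j ∈ univ.filter (fun j => B i j), p j) :=
        mul_le_mul_of_nonneg_left hp2 (le_of_lt hp1)
  -- rewrite as double sum over univ
  have h2 : ∀ i, p i * (∑ j ∈ univ.filter (fun j => B i j), p j) = ∑ j, f i j := by
    intro i
    rw [Finset.mul_sum, Finset.sum_filter]
  have hsplit : ∑ i ∈ S, p i * (∑ j ∈ univ.filter (fun j => B i j), p j)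
      = (∑ i ∈ S, ∑ j ∈ S, f i j) + (∑ i ∈ S, ∑ j ∈ Sᶜ, f i j) := by
    rw [← Finset.sum_add_distrib]
    apply Finset.sum_congr rfl
    intro i _
    rw [h2 i, Finset.sum_add_sum_compl]
  -- bound the S×S part
  have hT1 : ∑ i ∈ S, ∑ j ∈ S, f i j ≤ (s * s - q) / 2 := by
    have hdouble : (∑ i ∈ S, ∑ j ∈ S, f i j) + (∑ i ∈ S, ∑ j ∈ S, f i j)
        = ∑ i ∈ S, ∑ j ∈ S, (f i j + f j i) := by
      simp only [Finset.sum_add_distrib]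
      congr 1
      exact Finset.sum_comm
    have hbound : ∑ i ∈ S, ∑ j ∈ S, (f i j + f j i)
        ≤ ∑ i ∈ S, ∑ j ∈ S, (p i * p j - (if i = j then (p i)^2 else 0)) := by
      apply Finset.sum_le_sum; intro i _
      apply Finset.sum_le_sum; intro j _
      by_cases hij : i = j
      · subst hij
        have : ¬ B i i := fun h => hB i i h h
        simp [hf, this, sq]
      · simp only [hf, hij, if_false, sub_zero]
        by_cases h1' : B i j
        · have h2' : ¬ B j i := hB i j h1'
          simp [h1', h2']
        · by_cases h2' : B j i
          · simp [h1', h2', mul_comm]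
          · simp [h1', h2']
            exact mul_nonneg (hp i) (hp j)
    have hval : ∑ i ∈ S, ∑ j ∈ S, (p i * p j - (if i = j then (p i)^2 else 0))
        = s * s - q := by
      simp only [Finset.sum_sub_distrib]
      congr 1
      · rw [hs, Finset.sum_mul_sum]
      · rw [hq]
        apply Finset.sum_congr rfl
        intro i hi
        rw [Finset.sum_ite_eq]
        simp [hi]
    linarith [hdouble, hbound, hval]
  -- bound the S×Sᶜ part
  have hT2 : ∑ i ∈ S, ∑ j ∈ Sᶜ, f i j ≤ s * (1 - s) := by
    have : ∑ i ∈ S, ∑ j ∈ Sᶜ, f i j ≤ ∑ i ∈ S, ∑ j ∈ Sᶜ, p i * p j := by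
      apply Finset.sum_le_sum; intro i _
      apply Finset.sum_le_sum; intro j _
      by_cases h : B i j
      · simp [hf, h]
      · simp [hf, h]
        exact mul_nonneg (hp i) (hp j)
    calc ∑ i ∈ S, ∑ j ∈ Sᶜ, f i j ≤ ∑ i ∈ S, ∑ j ∈ Sᶜ, p i * p j := this
    _ = s * (1 - s) := by
        rw [← Finset.sum_mul_sum, ← hs, hcompl]
  have key : (1 - α) * s ≤ (s * s - q) / 2 + s * (1 - s) := by
    rw [hsplit] at h1
    linarith
  have hq0 : 0 ≤ q := Finset.sum_nonneg fun i _ => sq_nonneg _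
  have hfin : q / s ≤ 2 * α - s := by
    rw [div_le_iff₀ hpos]
    nlinarith [key]
  linarith [hfin]
end

section
/- For any α ∈ [0,1], any asymmetric relation B on ι = {1,…,n+1}, and any nonnegative weights p summing to 1, the strange points satisfy the pairing inequality Σ_{i ∈ S} p i · (1/2) Σ_{j ∈ S, j ≠ i} p j ≤ Σ_{i ∈ S} p i (α − p i); equivalently, (1/2)·Σ over ordered pairs (i,j) of distinct strange points of p i · p j is at most Σ_{i ∈ S} p i (α − p i). -/
open Finset

/-- **Pairing inequality for strange points.**
For any α ∈ [0,1], any asymmetric relation `B` on `ι = Fin (n+1)`, and any nonnegative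
weights `p` summing to 1, the set of strange points
`S = {i : 0 < p i ∧ ∑_{j : B i j} p j ≥ 1 - α}` satisfies
`∑ i ∈ S, p i * ((1/2) * ∑_{j ∈ S, j ≠ i} p j) ≤ ∑ i ∈ S, p i * (α - p i)`. -/
theorem strange_points_pairing_inequality (n : ℕ) (α : ℝ) (hα : α ∈ Set.Icc (0 : ℝ) 1)
    (B : Fin (n + 1) → Fin (n + 1) → Prop) [DecidableRel B]
    (hB : ∀ i j, B i j → ¬ B j i)
    (p : Fin (n + 1) → ℝ) (hp : ∀ i, 0 ≤ p i) (hsum : ∑ i, p i = 1)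
    (S : Finset (Fin (n + 1)))
    (hS : S = univ.filter
      (fun i => 0 < p i ∧ 1 - α ≤ ∑ j ∈ univ.filter (fun j => B i j), p j)) :
    ∑ i ∈ S, p i * ((1 / 2) * ∑ j ∈ S.erase i, p j) ≤ ∑ i ∈ S, p i * (α - p i) := by
  have hirr : ∀ i, ¬ B i i := fun i h => hB i i h h
  -- key pointwise bound
  have key : ∀ i ∈ S, ∑ j ∈ S, (if j ≠ i ∧ ¬ B i j then p i * p j else 0) ≤ p i * (α - p i) := by
    intro i hi
    have hi' := hi
    rw [hS, mem_filter] at hi'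
    obtain ⟨-, hpi, hBi⟩ := hi'
    have h1 : ∑ j ∈ (univ.erase i).filter (fun j => ¬ B i j), p j ≤ α - p i := by
      have hsplit := Finset.sum_filter_add_sum_filter_not (univ.erase i) (fun j => B i j) p
      have herase : ∑ j ∈ univ.erase i, p j = 1 - p i := by
        rw [Finset.sum_erase_eq_sub (mem_univ i), hsum]
      have hBfilter : (univ.erase i).filter (fun j => B i j)
          = univ.filter (fun j => B i j) := by
        ext j
        simp only [mem_filter, mem_erase, mem_univ, true_and, and_true]
        constructor
        · rintro ⟨-, h⟩; exact h
        · intro h; exact ⟨fun hji => hirr i (hji ▸ h), h⟩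
      rw [hBfilter, herase] at hsplit
      linarith
    have h2 : ∑ j ∈ S, (if j ≠ i ∧ ¬ B i j then p j else 0)
        ≤ ∑ j ∈ (univ.erase i).filter (fun j => ¬ B i j), p j := by
      rw [← Finset.sum_filter]
      apply Finset.sum_le_sum_of_subset_of_nonneg
      · intro j hj
        simp only [mem_filter, mem_erase, mem_univ, true_and] at hj ⊢
        tauto
      · intro j _ _; exact hp j
    have h3 : ∑ j ∈ S, (if j ≠ i ∧ ¬ B i j then p i * p j else 0)
        = p i * ∑ j ∈ S, (if j ≠ i ∧ ¬ B i j then p j else 0) := by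
      rw [Finset.mul_sum]
      apply Finset.sum_congr rfl
      intro j _
      split <;> ring
    rw [h3]
    exact mul_le_mul_of_nonneg_left (le_trans h2 h1) (le_of_lt hpi)
  -- rewrite LHS inner sums as ite sums over S
  have hinner : ∀ i ∈ S, ∑ j ∈ S.erase i, p j
      = ∑ j ∈ S, (if j ≠ i ∧ B i j then p j else 0)
        + ∑ j ∈ S, (if j ≠ i ∧ ¬ B i j then p j else 0) := by
    intro i hi
    rw [← Finset.sum_add_distrib,
      ← Finset.sum_subset (Finset.erase_subset i S) (by
        intro j hjS hjne
        have hji : j = i := by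
          by_contra h
          exact hjne (Finset.mem_erase.mpr ⟨h, hjS⟩)
        subst hji
        simp)]
    apply Finset.sum_congr rfl
    intro j hj
    have hji : j ≠ i := (Finset.mem_erase.mp hj).1
    by_cases hb : B i j <;> simp [hji, hb]
  -- swap bound: sum over B-pairs ≤ sum over not-B pairs
  have hswap : ∑ i ∈ S, ∑ j ∈ S, (if j ≠ i ∧ B i j then p i * p j else 0)
      ≤ ∑ i ∈ S, ∑ j ∈ S, (if j ≠ i ∧ ¬ B i j then p i * p j else 0) := by
    rw [Finset.sum_comm]
    apply Finset.sum_le_sum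
    intro i _
    apply Finset.sum_le_sum
    intro j _
    by_cases h : i ≠ j ∧ B j i
    · rw [if_pos h, if_pos ⟨h.1.symm, hB j i h.2⟩, mul_comm]
    · rw [if_neg h]
      by_cases h' : j ≠ i ∧ ¬ B i j
      · rw [if_pos h']; exact mul_nonneg (hp i) (hp j)
      · rw [if_neg h']
  -- put everything together
  have lhs_eq : ∑ i ∈ S, p i * ((1 / 2) * ∑ j ∈ S.erase i, p j)
      = (1 / 2) * (∑ i ∈ S, ∑ j ∈ S, (if j ≠ i ∧ B i j then p i * p j else 0)
        + ∑ i ∈ S, ∑ j ∈ S, (if j ≠ i ∧ ¬ B i j then p i * p j else 0)) := by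
    rw [← Finset.sum_add_distrib, Finset.mul_sum]
    apply Finset.sum_congr rfl
    intro i hi
    rw [hinner i hi]
    have e1 : ∑ j ∈ S, (if j ≠ i ∧ B i j then p i * p j else 0)
        = p i * ∑ j ∈ S, (if j ≠ i ∧ B i j then p j else 0) := by
      rw [Finset.mul_sum]; exact Finset.sum_congr rfl fun j _ => by split <;> ring
    have e2 : ∑ j ∈ S, (if j ≠ i ∧ ¬ B i j then p i * p j else 0)
        = p i * ∑ j ∈ S, (if j ≠ i ∧ ¬ B i j then p j else 0) := by
      rw [Finset.mul_sum]; exact Finset.sum_congr rfl fun j _ => by split <;> ring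
    rw [e1, e2]; ring
  rw [lhs_eq]
  have hC : ∑ i ∈ S, ∑ j ∈ S, (if j ≠ i ∧ ¬ B i j then p i * p j else 0)
      ≤ ∑ i ∈ S, p i * (α - p i) := Finset.sum_le_sum key
  have hA := hswap
  linarith
end

section
/- Let B be an asymmetric relation (B i j implies ¬ B j i) on a finite set of N elements and let α ∈ [0,1]. Then the number of elements i that beat at least (1−α)N other elements, i.e., with #{j : B i j} ≥ (1−α)N, is at most 2αN. -/
open Finset

/-- **Tournament bound (uniform-weight case).**
Let `B` be an asymmetric relation on a finite set of `N` elements and `α ∈ [0,1]`. Then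
the number of elements `i` that beat at least `(1-α)N` other elements, i.e. with
`#{j : B i j} ≥ (1-α)N`, is at most `2αN`. -/
theorem tournament_strange_count_le (N : ℕ) (hN : 0 < N) (α : ℝ) (hα : α ∈ Set.Icc (0 : ℝ) 1)
    (B : Fin N → Fin N → Prop) [DecidableRel B]
    (hB : ∀ i j, B i j → ¬ B j i) :
    ((univ.filter
        (fun i => (1 - α) * N ≤ ((univ.filter (fun j => B i j)).card : ℝ))).card : ℝ)
      ≤ 2 * α * N := by
  classical
  obtain ⟨hα0, hα1⟩ := hα
  set s : Finset (Fin N) := univ.filter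
      (fun i => (1 - α) * N ≤ ((univ.filter (fun j => B i j)).card : ℝ)) with hs
  set k := s.card with hk
  rcases Nat.eq_zero_or_pos k with hk0 | hkpos
  · rw [hk0]
    push_cast
    positivity
  have hkN : k ≤ N := by
    simpa [hk] using card_le_card (subset_univ s)
  -- degree bound inside s
  have hdeg : ∀ i ∈ s, (k : ℝ) - α * N ≤ ((s.filter (fun j => B i j)).card : ℝ) := by
    intro i hi
    have hi' : (1 - α) * N ≤ ((univ.filter (fun j => B i j)).card : ℝ) :=
      (mem_filter.mp hi).2
    have hsub : univ.filter (fun j => B i j) ⊆ (s.filter (fun j => B i j)) ∪ (univ \ s) := by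
      intro j hj
      by_cases hjs : j ∈ s
      · exact mem_union.mpr (Or.inl (mem_filter.mpr ⟨hjs, (mem_filter.mp hj).2⟩))
      · exact mem_union.mpr (Or.inr (mem_sdiff.mpr ⟨mem_univ _, hjs⟩))
    have h1 : (univ.filter (fun j => B i j)).card
        ≤ (s.filter (fun j => B i j)).card + (N - k) := by
      calc (univ.filter (fun j => B i j)).card
          ≤ ((s.filter (fun j => B i j)) ∪ (univ \ s)).card := card_le_card hsub
        _ ≤ (s.filter (fun j => B i j)).card + (univ \ s).card := card_union_le _ _
        _ = (s.filter (fun j => B i j)).card + (N - k) := by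
            rw [card_sdiff_of_subset (subset_univ s)]; simp [hk]
    have h1' : ((univ.filter (fun j => B i j)).card : ℝ)
        ≤ ((s.filter (fun j => B i j)).card : ℝ) + ((N : ℝ) - k) := by
      have := (Nat.cast_le (α := ℝ)).mpr h1
      push_cast [Nat.cast_sub hkN] at this
      linarith
    nlinarith
  -- the total inside-degree sum
  set d : ℕ := ∑ i ∈ s, (s.filter (fun j => B i j)).card with hd
  have hsum1 : (k : ℝ) * ((k : ℝ) - α * N) ≤ (d : ℝ) := by
    have : ∑ i ∈ s, ((k : ℝ) - α * N) ≤ ∑ i ∈ s, ((s.filter (fun j => B i j)).card : ℝ) :=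
      Finset.sum_le_sum hdeg
    rw [Finset.sum_const, nsmul_eq_mul, ← hk] at this
    rw [hd]; push_cast; linarith
  -- double counting: 2*d + k ≤ k*k
  have hirr : ∀ i, ¬ B i i := fun i h => hB i i h h
  have hdsum : d = ∑ p ∈ s ×ˢ s, (if B p.1 p.2 then 1 else 0) := by
    rw [hd, Finset.sum_product]
    exact Finset.sum_congr rfl fun i _ => Finset.card_filter _ _
  have hdsum' : d = ∑ p ∈ s ×ˢ s, (if B p.2 p.1 then 1 else 0) := by
    rw [hd, Finset.sum_product, Finset.sum_comm]
    exact Finset.sum_congr rfl fun i _ => Finset.card_filter _ _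
  have hdiag : (∑ p ∈ s ×ˢ s, (if p.1 = p.2 then 1 else 0)) = k := by
    rw [Finset.sum_product]
    have : ∀ i ∈ s, (∑ j ∈ s, (if i = j then 1 else 0)) = 1 := by
      intro i hi
      rw [Finset.sum_ite_eq s i (fun _ => 1)]
      simp [hi]
    rw [Finset.sum_congr rfl this]
    simp [hk]
  have hkey : 2 * d + k ≤ k * k := by
    have hle : ∑ p ∈ s ×ˢ s,
        ((if B p.1 p.2 then 1 else 0) + (if B p.2 p.1 then 1 else 0)
          + (if p.1 = p.2 then 1 else 0)) ≤ ∑ _p ∈ s ×ˢ s, 1 := by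
      apply Finset.sum_le_sum
      intro p hp
      by_cases heq : p.1 = p.2
      · have h1 : ¬ B p.1 p.2 := heq ▸ hirr p.1
        have h2 : ¬ B p.2 p.1 := heq ▸ hirr p.1
        simp [heq, h1, h2, hirr]
      · by_cases hb : B p.1 p.2
        · simp [heq, hb, hB _ _ hb]
        · by_cases hb' : B p.2 p.1 <;> simp [heq, hb, hb']
    have heq1 : 2 * d + k = ∑ p ∈ s ×ˢ s,
        ((if B p.1 p.2 then 1 else 0) + (if B p.2 p.1 then 1 else 0)
          + (if p.1 = p.2 then 1 else 0)) := by
      rw [Finset.sum_add_distrib, Finset.sum_add_distrib, hdiag, ← hdsum, ← hdsum']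
      ring
    have heq2 : (∑ _p ∈ s ×ˢ s, 1) = k * k := by
      simp [Finset.sum_const, Finset.card_product, hk]
    rw [heq1, ← heq2]
    exact hle
  have hkey' : 2 * (d : ℝ) + (k : ℝ) ≤ (k : ℝ) * k := by
    exact_mod_cast hkey
  have hk1 : (1 : ℝ) ≤ (k : ℝ) := by exact_mod_cast hkpos
  have hkpos' : (0 : ℝ) < k := by linarith
  have h2 : ((k : ℝ) + 1) * k ≤ (2 * α * N) * k := by nlinarith
  have h3 : (k : ℝ) + 1 ≤ 2 * α * N := le_of_mul_le_mul_right h2 hkpos'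
  linarith
end

section
/- Let n ≥ 1, let a_1,…,a_n ∈ ℝ (leave-one-out predictions at the test point), let r_1,…,r_n ≥ 0 (leave-one-out residuals), let p_1,…,p_{n+1} ≥ 0 with Σ_{i=1}^{n+1} p_i = 1, and let α ∈ (0,1). Define Q⁺_{1−α} = inf{t ∈ ℝ : Σ_{i : a_i + r_i ≤ t} p_i ≥ 1−α} and Q⁻_α = inf{t ∈ ℝ : p_{n+1} + Σ_{i : a_i − r_i ≤ t} p_i ≥ α}, both infima taken in the extended real line (equal to +∞ when the defining set is empty). If y ∈ ℝ lies outside the interval [Q⁻_α, Q⁺_{1−α}] (i.e., y < Q⁻_α or y > Q⁺_{1−α}), then Σ_{i : |y − a_i| > r_i} p_i ≥ 1 − α. -/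
open Finset

/-- **Noncoverage of the weighted jackknife+ (JAW-type) interval forces strangeness.**
Let `n ≥ 1`, let `a₁,…,aₙ ∈ ℝ` (leave-one-out predictions at the test point), let
`r₁,…,rₙ ≥ 0` (leave-one-out residuals), let `p₁,…,p_{n+1} ≥ 0` with
`∑_{i=1}^{n+1} pᵢ = 1` (here `pExtra` plays the role of `p_{n+1}`), and let
`α ∈ (0,1)`.  Define `Q⁺_{1-α} = inf {t : ∑_{i : aᵢ + rᵢ ≤ t} pᵢ ≥ 1-α}` and
`Q⁻_α = inf {t : p_{n+1} + ∑_{i : aᵢ - rᵢ ≤ t} pᵢ ≥ α}`, both infima taken in the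
extended real line.  If `y ∈ ℝ` lies outside the interval `[Q⁻_α, Q⁺_{1-α}]`, then
`∑_{i : |y - aᵢ| > rᵢ} pᵢ ≥ 1 - α`. -/
theorem jaw_noncoverage_strange (n : ℕ) (hn : 1 ≤ n) (a r : Fin n → ℝ)
    (hr : ∀ i, 0 ≤ r i) (p : Fin n → ℝ) (pExtra : ℝ)
    (hp : ∀ i, 0 ≤ p i) (hpExtra : 0 ≤ pExtra) (hsum : ∑ i, p i + pExtra = 1)
    (α : ℝ) (hα : α ∈ Set.Ioo (0 : ℝ) 1) (y : ℝ)
    (hy : (y : EReal) < sInf (Real.toEReal ''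
            {t : ℝ | α ≤ pExtra + ∑ i ∈ univ.filter (fun i => a i - r i ≤ t), p i})
        ∨ sInf (Real.toEReal ''
            {t : ℝ | 1 - α ≤ ∑ i ∈ univ.filter (fun i => a i + r i ≤ t), p i})
          < (y : EReal)) :
    1 - α ≤ ∑ i ∈ univ.filter (fun i => r i < |y - a i|), p i := by
  rcases hy with hy | hy
  · -- y below lower quantile: y is not in the set
    have hymem : ¬ (α ≤ pExtra + ∑ i ∈ univ.filter (fun i => a i - r i ≤ y), p i) := by
      intro h
      have : sInf (Real.toEReal ''
          {t : ℝ | α ≤ pExtra + ∑ i ∈ univ.filter (fun i => a i - r i ≤ t), p i})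
          ≤ (y : EReal) := sInf_le ⟨y, h, rfl⟩
      exact absurd hy (not_lt.mpr this)
    push_neg at hymem
    have hsplit := Finset.sum_filter_add_sum_filter_not univ (fun i => a i - r i ≤ y) p
    have hlb : 1 - α ≤ ∑ i ∈ univ.filter (fun i => ¬ a i - r i ≤ y), p i := by
      nlinarith [hsplit]
    refine hlb.trans (Finset.sum_le_sum_of_subset_of_nonneg ?_ (fun i _ _ => hp i))
    intro i hi
    simp only [mem_filter, mem_univ, true_and, not_le] at hi ⊢
    have : r i < a i - y := by linarith
    calc r i < a i - y := this
      _ ≤ |y - a i| := by rw [abs_sub_comm]; exact le_abs_self _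
  · -- upper quantile below y: some t < y is in the set
    rw [sInf_lt_iff] at hy
    obtain ⟨e, ⟨t, ht, rfl⟩, hty⟩ := hy
    have hty' : t < y := by exact_mod_cast hty
    refine le_trans ht (Finset.sum_le_sum_of_subset_of_nonneg ?_ (fun i _ _ => hp i))
    intro i hi
    simp only [mem_filter, mem_univ, true_and] at hi ⊢
    have : r i < y - a i := by linarith
    exact this.trans_le (le_abs_self _)
end
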